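/- Let d ≥ 1, let G, D > 0, let x_t, x, g ∈ ℝ^d satisfy ‖g‖ ≤ G and ‖x_t − x‖ ≤ D, and let 0 ≤ η ≤ 2/(3DG). Then exp(−ℓ_t^η(x)) ≤ 1 + η⟨x_t − x, g⟩, where ℓ_t^η(x) = −η⟨x_t − x, g⟩ + η²⟨x_t − x, g⟩². -/

import Mathlib

lemma key (z : ℝ) (hz : |z| ≤ 2/3) : Real.exp (z - z^2) ≤ 1 + z := by
  obtain ⟨hz1, hz2⟩ := abs_le.mp hz
  rcases le_or_gt 0 z with h0 | h0
  · have h1 : 1 - (z - z^2) ≤ Real.exp (-(z - z^2)) := by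
      have := Real.add_one_le_exp (-(z - z^2)); linarith
    have hpos : (0:ℝ) < 1 - (z - z^2) := by nlinarith
    have h2 : Real.exp (z - z^2) ≤ 1 / (1 - (z - z^2)) := by
      rw [le_div_iff₀ hpos]
      calc Real.exp (z - z^2) * (1 - (z - z^2))
          ≤ Real.exp (z - z^2) * Real.exp (-(z-z^2)) :=
            mul_le_mul_of_nonneg_left h1 (Real.exp_nonneg _)
        _ = 1 := by rw [← Real.exp_add]; simp
    refine h2.trans ?_
    rw [div_le_iff₀ hpos]
    nlinarith [pow_nonneg h0 3]
  · set w : ℝ := -z with hw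
    have hw0 : 0 < w := by simp [hw]; linarith
    have hw2 : w ≤ 2/3 := by simp [hw]; linarith
    set s : ℝ := w + w^2 with hs
    have hs0 : 0 ≤ s := by positivity
    have hP : 1 + s + s^2/2 + s^3/6 + s^4/24 ≤ Real.exp s := by
      have := Real.sum_le_exp_of_nonneg hs0 5
      simp [Finset.sum_range_succ, Nat.factorial] at this
      linarith
    have hPpos : (0:ℝ) < 1 + s + s^2/2 + s^3/6 + s^4/24 := by positivity
    have hzs : z - z^2 = -s := by simp [hs, hw]; ring
    rw [hzs, Real.exp_neg]
    have hkey : (1:ℝ) ≤ (1 - w) * (1 + s + s^2/2 + s^3/6 + s^4/24) := by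
      rw [hs]
      nlinarith [sq_nonneg w, sq_nonneg (w - 2/3), pow_nonneg hw0.le 3, pow_nonneg hw0.le 4, pow_nonneg hw0.le 5, mul_nonneg (pow_nonneg hw0.le 5) (sub_nonneg.mpr hw2), mul_nonneg (pow_nonneg hw0.le 6) (sub_nonneg.mpr hw2), mul_nonneg (pow_nonneg hw0.le 7) (sub_nonneg.mpr hw2)]
    have h1w : 1 + z = 1 - w := by simp [hw]
    rw [h1w]
    rw [inv_le_iff_one_le_mul₀ (lt_of_lt_of_le hPpos (hP))]
    have h3 := mul_le_mul_of_nonneg_left hP (by linarith : (0:ℝ) ≤ 1 - w)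
    nlinarith [h3, hkey]

theorem exp_neg_expConcaveSurrogate_le
    (d : ℕ) (hd : 1 ≤ d) (G D : ℝ) (hG : 0 < G) (hD : 0 < D)
    (xt x g : EuclideanSpace ℝ (Fin d)) (hg : ‖g‖ ≤ G) (hxtx : ‖xt - x‖ ≤ D)
    (η : ℝ) (hη0 : 0 ≤ η) (hη : η ≤ 2 / (3 * D * G)) :
    Real.exp (-(-η * (inner ℝ (xt - x) g : ℝ) + η^2 * (inner ℝ (xt - x) g : ℝ)^2))
      ≤ 1 + η * (inner ℝ (xt - x) g : ℝ) := by
  set i : ℝ := (inner ℝ (xt - x) g : ℝ) with hi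
  have hiabs : |i| ≤ D * G := by
    calc |i| ≤ ‖xt - x‖ * ‖g‖ := abs_real_inner_le_norm _ _
      _ ≤ D * G := by
        apply mul_le_mul hxtx hg (norm_nonneg _) hD.le
  have hDG : 0 < D * G := mul_pos hD hG
  have hz : |η * i| ≤ 2 / 3 := by
    rw [abs_mul, abs_of_nonneg hη0]
    calc η * |i| ≤ (2 / (3 * D * G)) * (D * G) := by
          apply mul_le_mul hη hiabs (abs_nonneg _) (by positivity)
      _ = 2 / 3 := by field_simp
  have := key (η * i) hz
  calc Real.exp (-(-η * i + η^2 * i^2)) = Real.exp (η * i - (η * i)^2) := by ring_nf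
    _ ≤ 1 + η * i := this
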